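/- Let m ≥ 5 be odd, h = (m-1)/2, n = q^m - 1, and let a be an integer with q^{h+1} + 1 ≤ a ≤ q^{h+2}, q ∤ a, with q-adic expansion a = Σ_{i=0}^{h+1} a_i q^i. If there exists r with 2 ≤ r ≤ h - 1 such that a_r ≠ 0, then a is the coset leader of C_a and |C_a| = m. -/

import Mathlib

/-- The q-cyclotomic coset of a modulo n: {a * q^j mod n : j ≥ 0}. -/
def cyclCoset (q n a : ℕ) : Finset ℕ :=
  (Finset.range n).image (fun j => a * q ^ j % n)

/-- a is the coset leader (smallest element) of its q-cyclotomic coset modulo n. -/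
def IsCosetLeader (q n a : ℕ) : Prop :=
  ∀ j : ℕ, a ≤ a * q ^ j % n

theorem stmt_3 (q m : ℕ) (hq : IsPrimePow q) (hm : Odd m) (hm5 : 5 ≤ m)
    (a : ℕ) (d : ℕ → ℕ)
    (ha1 : q ^ ((m - 1) / 2 + 1) + 1 ≤ a) (ha2 : a ≤ q ^ ((m - 1) / 2 + 2))
    (hqa : ¬ q ∣ a) (hdlt : ∀ i, d i < q)
    (hd : a = ∑ i ∈ Finset.range ((m - 1) / 2 + 2), d i * q ^ i)
    (hr : ∃ r, 2 ≤ r ∧ r ≤ (m - 1) / 2 - 1 ∧ d r ≠ 0) :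
    IsCosetLeader q (q ^ m - 1) a ∧ (cyclCoset q (q ^ m - 1) a).card = m := by
  obtain ⟨r, hr2, hrh, hdr⟩ := hr
  have hq2 : 2 ≤ q := hq.two_le
  obtain ⟨k, hk⟩ := hm
  set h : ℕ := (m - 1) / 2 with hh
  have hmh : m = 2 * h + 1 := by omega
  have hh2 : 2 ≤ h := by omega
  have hq1 : 1 ≤ q := by omega
  -- digit sums are small
  have hsum : ∀ k : ℕ, (∑ i ∈ Finset.range k, d i * q ^ i) < q ^ k := by
    intro k
    induction k with
    | zero => simp
    | succ k ih =>
      rw [Finset.sum_range_succ, pow_succ]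
      have h1 : d k * q ^ k + q ^ k ≤ q ^ k * q := by
        calc d k * q ^ k + q ^ k = (d k + 1) * q ^ k := by ring
        _ ≤ q * q ^ k := Nat.mul_le_mul_right _ (hdlt k)
        _ = q ^ k * q := Nat.mul_comm _ _
      linarith
  have hlt : a < q ^ (h + 2) := by rw [hd]; exact hsum (h + 2)
  have ha0 : 1 ≤ a := le_trans (Nat.le_add_left 1 _) ha1
  -- the digit r gives a lower bound on a % q^s for s ≥ r+1
  have hamod1 : q ^ r ≤ a % q ^ (r + 1) := by
    have hsplit : (∑ i ∈ Finset.Ico 0 (r + 1), d i * q ^ i)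
        + ∑ i ∈ Finset.Ico (r + 1) (h + 2), d i * q ^ i
        = ∑ i ∈ Finset.Ico 0 (h + 2), d i * q ^ i :=
      Finset.sum_Ico_consecutive _ (Nat.zero_le _) (by omega)
    have hdvd : q ^ (r + 1) ∣ ∑ i ∈ Finset.Ico (r + 1) (h + 2), d i * q ^ i :=
      Finset.dvd_sum fun i hi => ((pow_dvd_pow q (Finset.mem_Ico.mp hi).1).mul_left (d i))
    obtain ⟨c, hc⟩ := hdvd
    have hA : a = (∑ i ∈ Finset.range (r + 1), d i * q ^ i) + q ^ (r + 1) * c := by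
      rw [hd, Finset.range_eq_Ico, ← hsplit, hc, Finset.range_eq_Ico]
    have hAlt : (∑ i ∈ Finset.range (r + 1), d i * q ^ i) < q ^ (r + 1) := hsum (r + 1)
    have hmodA : a % q ^ (r + 1) = ∑ i ∈ Finset.range (r + 1), d i * q ^ i := by
      rw [hA, Nat.add_mul_mod_self_left, Nat.mod_eq_of_lt hAlt]
    rw [hmodA]
    calc q ^ r = 1 * q ^ r := (one_mul _).symm
    _ ≤ d r * q ^ r := Nat.mul_le_mul_right _ (Nat.one_le_iff_ne_zero.mpr hdr)
    _ ≤ ∑ i ∈ Finset.range (r + 1), d i * q ^ i :=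
        Finset.single_le_sum (f := fun i => d i * q ^ i) (fun i _ => Nat.zero_le _)
          (Finset.self_mem_range_succ r)
  have hamod : ∀ s, r + 1 ≤ s → q ^ r ≤ a % q ^ s := by
    intro s hs
    calc q ^ r ≤ a % q ^ (r + 1) := hamod1
    _ = (a % q ^ s) % q ^ (r + 1) := (Nat.mod_mod_of_dvd a (pow_dvd_pow q hs)).symm
    _ ≤ a % q ^ s := Nat.mod_le _ _
  have hL1 : ∀ s, 1 ≤ s → 1 ≤ a % q ^ s := by
    intro s hs
    rcases Nat.eq_zero_or_pos (a % q ^ s) with h0 | h0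
    · exact absurd (dvd_trans (dvd_pow_self q (by omega)) (Nat.dvd_of_mod_eq_zero h0)) hqa
    · exact h0
  -- a < q^m - 1
  have hq_pow : q ^ (h + 2) * 2 ≤ q ^ m := by
    calc q ^ (h + 2) * 2 ≤ q ^ (2 * h) * q :=
        Nat.mul_le_mul (Nat.pow_le_pow_right hq1 (by omega)) hq2
    _ = q ^ m := by rw [← pow_succ]; congr 1; omega
  have hqm1 : 1 ≤ q ^ m := Nat.one_le_pow _ _ (by omega)
  have hqh1 : 1 ≤ q ^ (h + 2) := Nat.one_le_pow _ _ (by omega)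
  have han' : a < q ^ m - 1 := by omega
  -- q^m ≡ 1 mod (q^m - 1)
  have hq_m1 : q ^ m - 1 + 1 = q ^ m := Nat.sub_add_cancel hqm1
  have hmone : q ^ m ≡ 1 [MOD q ^ m - 1] :=
    ((Nat.modEq_iff_dvd' hqm1).mpr dvd_rfl).symm
  -- reduce exponents mod m
  have hred : ∀ j, a * q ^ j % (q ^ m - 1) = a * q ^ (j % m) % (q ^ m - 1) := by
    intro j
    have h3 : q ^ j = (q ^ m) ^ (j / m) * q ^ (j % m) := by
      rw [← pow_mul, ← pow_add, Nat.div_add_mod]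
    have h2 : (q ^ m) ^ (j / m) ≡ 1 [MOD q ^ m - 1] := by
      simpa using hmone.pow (j / m)
    have h1 : a * q ^ j ≡ a * q ^ (j % m) [MOD q ^ m - 1] := by
      rw [h3]
      calc a * ((q ^ m) ^ (j / m) * q ^ (j % m))
          = (q ^ m) ^ (j / m) * (a * q ^ (j % m)) := by ring
      _ ≡ 1 * (a * q ^ (j % m)) [MOD q ^ m - 1] := h2.mul_right _
      _ = a * q ^ (j % m) := one_mul _
    exact h1
  -- key strict lemma
  have key : ∀ t, 1 ≤ t → t < m → a < a * q ^ t % (q ^ m - 1) := by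
    intro t ht1 htm
    rcases le_or_gt t (h - 1) with hth | hth
    · -- small shift: no wraparound
      have h1 : (a + 1) * q ^ t ≤ q ^ m := by
        calc (a + 1) * q ^ t ≤ q ^ (h + 2) * q ^ t := Nat.mul_le_mul_right _ hlt
        _ = q ^ (h + 2 + t) := (pow_add q _ _).symm
        _ ≤ q ^ m := Nat.pow_le_pow_right hq1 (by omega)
      have hqt : 2 ≤ q ^ t := le_trans hq2 (Nat.le_self_pow (by omega) q)
      have h1' : a * q ^ t + q ^ t ≤ q ^ m := by rw [add_mul, one_mul] at h1; exact h1
      have h2 : a * q ^ t < q ^ m - 1 := by omega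
      rw [Nat.mod_eq_of_lt h2]
      calc a = a * 1 := (mul_one a).symm
      _ < a * q ^ t := mul_lt_mul_of_pos_left (by omega) (by omega)
    · -- wraparound
      have hht : h ≤ t := by omega
      set s : ℕ := m - t with hs
      have hst : s + t = m := by omega
      have hs1 : 1 ≤ s := by omega
      have hqs : 0 < q ^ s := Nat.pow_pos (by omega)
      set L := a % q ^ s with hL
      set H := a / q ^ s with hH
      have hLq : L < q ^ s := Nat.mod_lt _ hqs
      have hHq : H < q ^ (h + 2 - s) := by
        apply Nat.div_lt_of_lt_mul
        calc a < q ^ (h + 2) := hlt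
        _ = q ^ s * q ^ (h + 2 - s) := by rw [← pow_add]; congr 1; omega
      have b1 : (L + 1) * q ^ t ≤ q ^ m := by
        calc (L + 1) * q ^ t ≤ q ^ s * q ^ t := Nat.mul_le_mul_right _ hLq
        _ = q ^ m := by rw [← pow_add, hst]
      have b1' : L * q ^ t + q ^ t ≤ q ^ m := by rw [add_mul, one_mul] at b1; exact b1
      have b2 : H + 1 ≤ q ^ (t - 1) := by
        calc H + 1 ≤ q ^ (h + 2 - s) := hHq
        _ ≤ q ^ (t - 1) := Nat.pow_le_pow_right hq1 (by omega)
      have b3 : q ^ (t - 1) * 2 ≤ q ^ t := by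
        calc q ^ (t - 1) * 2 ≤ q ^ (t - 1) * q := Nat.mul_le_mul_left _ hq2
        _ = q ^ t := by rw [← pow_succ]; congr 1; omega
      have b4 : 1 ≤ q ^ (t - 1) := Nat.one_le_pow _ _ (by omega)
      have hvlt : L * q ^ t + H < q ^ m - 1 := by omega
      have heq : a * q ^ t % (q ^ m - 1) = L * q ^ t + H := by
        have hdm : q ^ s * H + L = a := Nat.div_add_mod a (q ^ s)
        have hrep : a * q ^ t = (L * q ^ t + H) + (q ^ m - 1) * H := by
          calc a * q ^ t = (q ^ s * H + L) * q ^ t := by rw [hdm]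
          _ = H * (q ^ s * q ^ t) + L * q ^ t := by ring
          _ = H * q ^ m + L * q ^ t := by rw [← pow_add, hst]
          _ = H * (q ^ m - 1 + 1) + L * q ^ t := by rw [hq_m1]
          _ = (L * q ^ t + H) + (q ^ m - 1) * H := by ring
        rw [hrep, Nat.add_mul_mod_self_left, Nat.mod_eq_of_lt hvlt]
      rw [heq]
      rcases le_or_gt (h + 2) t with ht2 | ht2
      · have hL1' : 1 ≤ L := hL1 s hs1
        calc a < q ^ (h + 2) := hlt
        _ ≤ q ^ t := Nat.pow_le_pow_right hq1 ht2
        _ = 1 * q ^ t := (one_mul _).symm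
        _ ≤ L * q ^ t := Nat.mul_le_mul_right _ hL1'
        _ ≤ L * q ^ t + H := Nat.le_add_right _ _
      · have hsr : r + 1 ≤ s := by omega
        have hLr : q ^ r ≤ L := hamod s hsr
        calc a < q ^ (h + 2) := hlt
        _ ≤ q ^ (r + t) := Nat.pow_le_pow_right hq1 (by omega)
        _ = q ^ r * q ^ t := pow_add q r t
        _ ≤ L * q ^ t := Nat.mul_le_mul_right _ hLr
        _ ≤ L * q ^ t + H := Nat.le_add_right _ _
  -- coset leader
  have leader : IsCosetLeader q (q ^ m - 1) a := by
    intro j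
    rw [hred j]
    rcases Nat.eq_zero_or_pos (j % m) with h0 | h0
    · rw [h0, pow_zero, mul_one, Nat.mod_eq_of_lt han']
    · exact le_of_lt (key _ h0 (Nat.mod_lt _ (by omega)))
  refine ⟨leader, ?_⟩
  -- cardinality
  have hm_le_n : m ≤ q ^ m - 1 := by
    have h1 := Nat.lt_two_pow_self (n := m)
    have h2 : 2 ^ m ≤ q ^ m := Nat.pow_le_pow_left hq2 m
    omega
  have haux : ∀ i j, i < j → j < m →
      a * q ^ i % (q ^ m - 1) ≠ a * q ^ j % (q ^ m - 1) := by
    intro i j hij hjm hEq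
    have e1 : a * q ^ i * q ^ (m - j) ≡ a * q ^ j * q ^ (m - j) [MOD q ^ m - 1] :=
      Nat.ModEq.mul_right _ hEq
    have e2 : a * q ^ j * q ^ (m - j) = a * q ^ m := by
      rw [mul_assoc, ← pow_add]; congr 2; omega
    have e4 : a * q ^ i * q ^ (m - j) = a * q ^ (i + (m - j)) := by
      rw [mul_assoc, ← pow_add]
    have e3 : a * q ^ m ≡ a * 1 [MOD q ^ m - 1] := hmone.mul_left a
    have emod : a * q ^ (i + (m - j)) ≡ a [MOD q ^ m - 1] := by
      calc a * q ^ (i + (m - j)) = a * q ^ i * q ^ (m - j) := e4.symm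
      _ ≡ a * q ^ j * q ^ (m - j) [MOD q ^ m - 1] := e1
      _ = a * q ^ m := e2
      _ ≡ a * 1 [MOD q ^ m - 1] := e3
      _ = a := mul_one a
    have hkey := key (i + (m - j)) (by omega) (by omega)
    have : a * q ^ (i + (m - j)) % (q ^ m - 1) = a % (q ^ m - 1) := emod
    rw [this, Nat.mod_eq_of_lt han'] at hkey
    exact lt_irrefl a hkey
  have himg : cyclCoset q (q ^ m - 1) a
      = (Finset.range m).image (fun j => a * q ^ j % (q ^ m - 1)) := by
    unfold cyclCoset
    apply Finset.Subset.antisymm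
    · intro x hx
      simp only [Finset.mem_image, Finset.mem_range] at hx ⊢
      obtain ⟨j, _, hfx⟩ := hx
      exact ⟨j % m, Nat.mod_lt _ (by omega), by rw [← hred j]; exact hfx⟩
    · apply Finset.image_subset_image
      intro x hx
      simp only [Finset.mem_range] at *
      exact lt_of_lt_of_le hx hm_le_n
  have hinj : Set.InjOn (fun j => a * q ^ j % (q ^ m - 1)) ↑(Finset.range m) := by
    intro i hi j hj hEq
    simp only [Finset.coe_range, Set.mem_Iio] at hi hj
    rcases lt_trichotomy i j with hlt' | hEq' | hlt'
    · exact absurd hEq (haux i j hlt' hj)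
    · exact hEq'
    · exact absurd hEq.symm (haux j i hlt' hi)
  rw [himg, Finset.card_image_of_injOn hinj, Finset.card_range]
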